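/- For every natural number l and positive integer N, the limit as N → ∞ of the expression Σ_{q₂=0}^{min(l,N-1)} (1/N^{q₂+1})·C(N,q₂+1)·(1/q₂!)·((2l)!/(2^{l-q₂}(l-q₂)!))·(1/N^{l-q₂}) equals the Catalan-type number (2l)!/(l!(l+1)!). -/

import Mathlib

open Filter Finset

lemma aux_choose (k : ℕ) :
    Filter.Tendsto (fun N : ℕ => (N.choose k : ℝ) / (N : ℝ) ^ k) Filter.atTop
      (nhds (1 / (k.factorial : ℝ))) := by
  have hfac : ∀ i : ℕ, Tendsto (fun N : ℕ => ((N : ℝ) - i) / N) atTop (nhds 1) := by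
    intro i
    have h0 : Tendsto (fun N : ℕ => 1 - (i : ℝ) / N) atTop (nhds 1) := by
      simpa using tendsto_const_nhds.sub (tendsto_const_div_atTop_nhds_zero_nat (i : ℝ))
    refine Tendsto.congr' ?_ h0
    filter_upwards [eventually_ge_atTop 1] with N hN
    have hN0 : (N : ℝ) ≠ 0 := by
      have : (1 : ℝ) ≤ N := by exact_mod_cast hN
      linarith
    field_simp
  have hprod : Tendsto (fun N : ℕ => ∏ i ∈ range k, ((N : ℝ) - i) / N) atTop
      (nhds (∏ _i ∈ range k, (1 : ℝ))) := tendsto_finset_prod _ fun i _ => hfac i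
  simp only [prod_const_one] at hprod
  have := hprod.div_const (k.factorial : ℝ)
  refine Tendsto.congr' ?_ this
  filter_upwards [eventually_ge_atTop k] with N hN
  have hd : (N.descFactorial k : ℝ) = ∏ i ∈ range k, ((N : ℝ) - i) := by
    rw [Nat.descFactorial_eq_prod_range]
    push_cast
    refine Finset.prod_congr rfl fun i hi => ?_
    rw [Nat.cast_sub (le_trans (le_of_lt (mem_range.mp hi)) hN)]
  have hN0 : (N : ℝ) ^ k ≠ 0 ∨ True := Or.inr trivial
  have hc : (N.choose k : ℝ) = (∏ i ∈ range k, ((N : ℝ) - i)) / (k.factorial : ℝ) := by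
    rw [← hd, eq_div_iff (by exact_mod_cast k.factorial_ne_zero), mul_comm]
    exact_mod_cast (Nat.descFactorial_eq_factorial_mul_choose N k).symm
  rw [hc, Finset.prod_div_distrib, Finset.prod_const, Finset.card_range]
  ring

theorem stmt_5 (l : ℕ) :
    Filter.Tendsto
      (fun N : ℕ =>
        ∑ q₂ ∈ Finset.range (min l (N - 1) + 1),
          (1 / (N : ℝ) ^ (q₂ + 1)) * (N.choose (q₂ + 1) : ℝ) * (1 / (q₂.factorial : ℝ)) *
            (((2 * l).factorial : ℝ) / (2 ^ (l - q₂) * ((l - q₂).factorial : ℝ))) *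
            (1 / (N : ℝ) ^ (l - q₂)))
      Filter.atTop
      (nhds (((2 * l).factorial : ℝ) / ((l.factorial : ℝ) * ((l + 1).factorial : ℝ)))) := by
  set c : ℕ → ℝ := fun q => (1 / (q.factorial : ℝ)) *
      (((2 * l).factorial : ℝ) / (2 ^ (l - q) * ((l - q).factorial : ℝ))) with hc
  set L : ℕ → ℝ := fun q => (1 / ((q + 1).factorial : ℝ)) * c q * (if q = l then 1 else 0)
    with hL
  have hterm : ∀ q ∈ range (l + 1), Tendsto (fun N : ℕ =>
      (1 / (N : ℝ) ^ (q + 1)) * (N.choose (q + 1) : ℝ) * (1 / (q.factorial : ℝ)) *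
        (((2 * l).factorial : ℝ) / (2 ^ (l - q) * ((l - q).factorial : ℝ))) *
        (1 / (N : ℝ) ^ (l - q))) atTop (nhds (L q)) := by
    intro q hq
    have hB : Tendsto (fun N : ℕ => 1 / (N : ℝ) ^ (l - q)) atTop
        (nhds (if q = l then 1 else 0)) := by
      by_cases h : q = l
      · simp [h]
      · have hm : 0 < l - q := by
          have := mem_range.mp hq
          omega
        rw [if_neg h]
        have h1 : Tendsto (fun N : ℕ => ((N : ℝ)) ^ (l - q)) atTop atTop :=
          (tendsto_pow_atTop hm.ne').comp tendsto_natCast_atTop_atTop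
        simpa [one_div, Function.comp_def] using tendsto_inv_atTop_zero.comp h1
    have := ((aux_choose (q + 1)).mul_const (c q)).mul hB
    refine Tendsto.congr' ?_ this
    filter_upwards with N
    simp only [hc]
    ring
  have hsum := tendsto_finset_sum (range (l + 1)) hterm
  have hLsum : ∑ q ∈ range (l + 1), L q =
      ((2 * l).factorial : ℝ) / ((l.factorial : ℝ) * ((l + 1).factorial : ℝ)) := by
    rw [Finset.sum_eq_single l]
    · simp [hL, hc, Nat.factorial]
      field_simp
    · intro q _ hq
      simp [hL, hq]
    · intro h
      exact absurd (mem_range.mpr (Nat.lt_succ_self l)) h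
  rw [hLsum] at hsum
  refine Tendsto.congr' ?_ hsum
  filter_upwards [eventually_ge_atTop (l + 1)] with N hN
  rw [min_eq_left (by omega)]
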